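/- Let m ≥ 1, 1 ≤ k ≤ m, and g ∈ ℝᵐ. Let Q̃ be the random m×k matrix consisting of the first k columns of an m×m random orthogonal matrix distributed according to the Haar probability measure on O(m). Then E[‖g − (m/k)·Q̃ Q̃ᵀ g‖²] = (m/k − 1)·‖g‖². In particular, the haar-k compressor is an ω-unbiased compressor with ω = m/k − 1. -/

import Mathlib

open Matrix MeasureTheory

/-- The first `k` columns of an `m × m` matrix (given as a function). -/
def firstCols {m : ℕ} (k : ℕ) (hkm : k ≤ m) (Q : Fin m → Fin m → ℝ) :
    Matrix (Fin m) (Fin k) ℝ :=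
  (Matrix.of Q).submatrix id (Fin.castLE hkm)

namespace HaarKAux

variable {m k : ℕ}

/-- The (scaled-free) projection matrix `Q̃ Q̃ᵀ`. -/
noncomputable def Pm (k : ℕ) (hkm : k ≤ m) (Q : Fin m → Fin m → ℝ) :
    Matrix (Fin m) (Fin m) ℝ :=
  firstCols k hkm Q * (firstCols k hkm Q)ᵀ

lemma Pm_apply (hkm : k ≤ m) (Q : Fin m → Fin m → ℝ) (i j : Fin m) :
    Pm k hkm Q i j = ∑ l : Fin k, Q i (Fin.castLE hkm l) * Q j (Fin.castLE hkm l) := by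
  simp [Pm, firstCols, Matrix.mul_apply]

lemma norm_sq_euclidean (x : EuclideanSpace ℝ (Fin m)) : ‖x‖ ^ 2 = ∑ i, x i ^ 2 := by
  rw [EuclideanSpace.norm_eq, Real.sq_sqrt (by positivity)]
  simp [sq_abs]

lemma BtB (hkm : k ≤ m) (Q : Fin m → Fin m → ℝ)
    (hQ : (Matrix.of Q)ᵀ * Matrix.of Q = 1) :
    (firstCols k hkm Q)ᵀ * firstCols k hkm Q = 1 := by
  ext a b
  have h1 : ((Matrix.of Q)ᵀ * Matrix.of Q) (Fin.castLE hkm a) (Fin.castLE hkm b)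
      = (1 : Matrix (Fin m) (Fin m) ℝ) (Fin.castLE hkm a) (Fin.castLE hkm b) := by rw [hQ]
  have h2 : ((firstCols k hkm Q)ᵀ * firstCols k hkm Q) a b
      = ((Matrix.of Q)ᵀ * Matrix.of Q) (Fin.castLE hkm a) (Fin.castLE hkm b) := by
    simp [firstCols, Matrix.mul_apply]
  rw [h2, h1]
  by_cases h : a = b
  · simp [h, Matrix.one_apply]
  · have : Fin.castLE hkm a ≠ Fin.castLE hkm b := fun hc => h (Fin.castLE_injective hkm hc)
    simp [Matrix.one_apply, h, this]

lemma Pm_symm (hkm : k ≤ m) (Q : Fin m → Fin m → ℝ) : (Pm k hkm Q)ᵀ = Pm k hkm Q := by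
  simp [Pm, Matrix.transpose_mul]

lemma Pm_idem (hkm : k ≤ m) (Q : Fin m → Fin m → ℝ)
    (hQ : (Matrix.of Q)ᵀ * Matrix.of Q = 1) :
    Pm k hkm Q * Pm k hkm Q = Pm k hkm Q := by
  unfold Pm
  rw [Matrix.mul_assoc, ← Matrix.mul_assoc (firstCols k hkm Q)ᵀ, BtB hkm Q hQ,
    Matrix.one_mul]

lemma row_bound (hkm : k ≤ m) (Q : Fin m → Fin m → ℝ)
    (hQ : (Matrix.of Q)ᵀ * Matrix.of Q = 1) (i : Fin m) :
    ∑ l : Fin k, Q i (Fin.castLE hkm l) ^ 2 ≤ 1 := by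
  have hQQt : Matrix.of Q * (Matrix.of Q)ᵀ = 1 := mul_eq_one_comm.mp hQ
  have hrow : ∑ l : Fin m, Q i l ^ 2 = 1 := by
    have := congrArg (fun M => M i i) hQQt
    simpa [Matrix.mul_apply, Matrix.one_apply, sq] using this
  calc ∑ l : Fin k, Q i (Fin.castLE hkm l) ^ 2
      = ∑ x ∈ Finset.univ.image (Fin.castLE hkm), Q i x ^ 2 :=
        by rw [Finset.sum_image (fun x _ y _ h => Fin.castLE_injective hkm h)]
    _ ≤ ∑ l : Fin m, Q i l ^ 2 :=
        Finset.sum_le_sum_of_subset_of_nonneg (Finset.subset_univ _)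
          (fun _ _ _ => sq_nonneg _)
    _ = 1 := hrow

lemma Pm_entry_bound (hkm : k ≤ m) (Q : Fin m → Fin m → ℝ)
    (hQ : (Matrix.of Q)ᵀ * Matrix.of Q = 1) (i j : Fin m) :
    |Pm k hkm Q i j| ≤ 1 := by
  rw [← sq_le_one_iff_abs_le_one, Pm_apply]
  calc (∑ l : Fin k, Q i (Fin.castLE hkm l) * Q j (Fin.castLE hkm l)) ^ 2
      ≤ (∑ l : Fin k, Q i (Fin.castLE hkm l) ^ 2) * ∑ l : Fin k, Q j (Fin.castLE hkm l) ^ 2 :=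
        Finset.sum_mul_sq_le_sq_mul_sq _ _ _
    _ ≤ 1 := mul_le_one₀ (row_bound hkm Q hQ i)
        (Finset.sum_nonneg fun _ _ => sq_nonneg _) (row_bound hkm Q hQ j)

lemma measurable_Pij (hkm : k ≤ m) (i j : Fin m) :
    Measurable fun Q : Fin m → Fin m → ℝ => Pm k hkm Q i j := by
  simp only [Pm_apply]
  exact Finset.measurable_sum _ fun l _ => by fun_prop

lemma measurableSet_orth :
    MeasurableSet {Q : Fin m → Fin m → ℝ | (Matrix.of Q)ᵀ * Matrix.of Q = 1} := by
  have : {Q : Fin m → Fin m → ℝ | (Matrix.of Q)ᵀ * Matrix.of Q = 1}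
      = ⋂ i, ⋂ j, {Q : Fin m → Fin m → ℝ |
          (∑ l, Q l i * Q l j) = (1 : Matrix (Fin m) (Fin m) ℝ) i j} := by
    ext Q
    simp only [Set.mem_setOf_eq, Set.mem_iInter, ← Matrix.ext_iff]
    constructor
    · intro h i j; rw [← h]; simp [Matrix.mul_apply]
    · intro h i j; rw [← h i j]; simp [Matrix.mul_apply]
  rw [this]
  refine MeasurableSet.iInter fun i => MeasurableSet.iInter fun j => ?_
  exact measurableSet_eq_fun
    (Finset.measurable_sum _ fun l _ => by fun_prop)
    measurable_const

lemma ae_orth (μ : Measure (Fin m → Fin m → ℝ)) [IsProbabilityMeasure μ]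
    (hsupp : μ {Q | (Matrix.of Q)ᵀ * Matrix.of Q = 1} = 1) :
    ∀ᵐ Q ∂μ, (Matrix.of Q)ᵀ * Matrix.of Q = 1 := by
  rw [ae_iff]
  have : {Q : Fin m → Fin m → ℝ | ¬(Matrix.of Q)ᵀ * Matrix.of Q = 1}
      = {Q : Fin m → Fin m → ℝ | (Matrix.of Q)ᵀ * Matrix.of Q = 1}ᶜ := rfl
  rw [this, prob_compl_eq_zero_iff measurableSet_orth]
  exact hsupp

lemma integrable_Pij (hkm : k ≤ m) (μ : Measure (Fin m → Fin m → ℝ))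
    [IsProbabilityMeasure μ]
    (hsupp : μ {Q | (Matrix.of Q)ᵀ * Matrix.of Q = 1} = 1) (i j : Fin m) :
    Integrable (fun Q => Pm k hkm Q i j) μ := by
  refine Integrable.mono' (integrable_const (1 : ℝ))
    (measurable_Pij hkm i j).aestronglyMeasurable ?_
  filter_upwards [ae_orth μ hsupp] with Q hQ
  rw [Real.norm_eq_abs]
  exact Pm_entry_bound hkm Q hQ i j

lemma pointwise (hkm : k ≤ m) (c : ℝ) (g : EuclideanSpace ℝ (Fin m))
    (Q : Fin m → Fin m → ℝ) (hQ : (Matrix.of Q)ᵀ * Matrix.of Q = 1) :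
    ‖g - c • Matrix.toEuclideanLin (Pm k hkm Q) g‖ ^ 2
      = ‖g‖ ^ 2 + (c ^ 2 - 2 * c) * ((fun i => g i) ⬝ᵥ Pm k hkm Q *ᵥ (fun i => g i)) := by
  set P := Pm k hkm Q with hP
  set w : Fin m → ℝ := P *ᵥ (fun i => g i) with hw
  have hcoord : ∀ i, (g - c • Matrix.toEuclideanLin P g) i = g i - c * w i := by
    intro i
    have h0 : (Matrix.toEuclideanLin P g) i = w i := rfl
    simp [h0]
  have h1 : w ᵥ* P = P *ᵥ w := by
    rw [hP]
    conv_lhs => rw [← Pm_symm hkm Q]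
    rw [Matrix.vecMul_transpose]
  have h2 : P *ᵥ w = w := by
    rw [hw, Matrix.mulVec_mulVec, hP, Pm_idem hkm Q hQ]
  have hww : w ⬝ᵥ w = (fun i => g i) ⬝ᵥ w := by
    nth_rewrite 2 [hw]
    rw [Matrix.dotProduct_mulVec, h1, h2, dotProduct_comm]
  have hsum : ‖g - c • Matrix.toEuclideanLin P g‖ ^ 2 = ∑ i, (g i - c * w i) ^ 2 := by
    rw [norm_sq_euclidean]
    exact Finset.sum_congr rfl fun i _ => by rw [hcoord i]
  rw [hsum, norm_sq_euclidean]
  simp only [dotProduct] at hww ⊢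
  have expand : (∑ i, (g i - c * w i) ^ 2)
      = (∑ i, g i ^ 2) - 2 * c * (∑ i, g i * w i) + c ^ 2 * (∑ i, w i * w i) := by
    rw [Finset.mul_sum, Finset.mul_sum, ← Finset.sum_sub_distrib, ← Finset.sum_add_distrib]
    exact Finset.sum_congr rfl fun i _ => by ring
  rw [expand, hww]
  ring

lemma firstCols_mul (hkm : k ≤ m) (U : Matrix (Fin m) (Fin m) ℝ) (Q : Fin m → Fin m → ℝ) :
    firstCols k hkm (Matrix.of.symm (U * Matrix.of Q)) = U * firstCols k hkm Q := by
  ext a b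
  simp [firstCols, Matrix.mul_apply]

lemma Pm_conj (hkm : k ≤ m) (U : Matrix (Fin m) (Fin m) ℝ) (Q : Fin m → Fin m → ℝ) :
    Pm k hkm (Matrix.of.symm (U * Matrix.of Q)) = U * Pm k hkm Q * Uᵀ := by
  simp [Pm, firstCols_mul hkm U Q, Matrix.transpose_mul, Matrix.mul_assoc]

lemma measurable_conj (U : Matrix (Fin m) (Fin m) ℝ) :
    Measurable (fun Q : Fin m → Fin m → ℝ => Matrix.of.symm (U * Matrix.of Q)) := by
  apply measurable_pi_lambda
  intro a
  apply measurable_pi_lambda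
  intro b
  show Measurable fun Q : Fin m → Fin m → ℝ => ∑ l, U a l * Q l b
  refine Finset.measurable_sum _ fun l _ => Measurable.const_mul ?_ _
  exact (measurable_pi_apply b).comp (measurable_pi_apply l)

lemma integral_Pij_conj (hkm : k ≤ m) (μ : Measure (Fin m → Fin m → ℝ))
    [IsProbabilityMeasure μ]
    (hsupp : μ {Q | (Matrix.of Q)ᵀ * Matrix.of Q = 1} = 1)
    (U : Matrix (Fin m) (Fin m) ℝ) (hU : Uᵀ * U = 1)
    (hmap : Measure.map (fun Q => Matrix.of.symm (U * Matrix.of Q)) μ = μ)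
    (i j : Fin m) :
    (∫ Q, Pm k hkm Q i j ∂μ)
      = ∑ a, ∑ b, U i a * ((∫ Q, Pm k hkm Q a b ∂μ) * U j b) := by
  conv_lhs => rw [← hmap]
  rw [integral_map (measurable_conj U).aemeasurable
    (measurable_Pij hkm i j).aestronglyMeasurable]
  have hptw : ∀ Q : Fin m → Fin m → ℝ, Pm k hkm (Matrix.of.symm (U * Matrix.of Q)) i j
      = ∑ a, ∑ b, U i a * (Pm k hkm Q a b * U j b) := by
    intro Q
    rw [Pm_conj hkm U Q, Matrix.mul_apply]
    simp_rw [Matrix.mul_apply, Matrix.transpose_apply, Finset.sum_mul]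
    rw [Finset.sum_comm]
    exact Finset.sum_congr rfl fun a _ => Finset.sum_congr rfl fun b _ => by ring
  simp_rw [hptw]
  rw [integral_finset_sum _ (fun a _ => integrable_finset_sum _ fun b _ =>
    ((integrable_Pij hkm μ hsupp a b).mul_const _).const_mul _)]
  refine Finset.sum_congr rfl fun a _ => ?_
  rw [integral_finset_sum _ (fun b _ =>
    ((integrable_Pij hkm μ hsupp a b).mul_const _).const_mul _)]
  refine Finset.sum_congr rfl fun b _ => ?_
  rw [MeasureTheory.integral_const_mul, MeasureTheory.integral_mul_const]

lemma entry_offdiag (hkm : k ≤ m) (μ : Measure (Fin m → Fin m → ℝ))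
    [IsProbabilityMeasure μ]
    (hsupp : μ {Q | (Matrix.of Q)ᵀ * Matrix.of Q = 1} = 1)
    (hinv : ∀ U : Matrix (Fin m) (Fin m) ℝ, Uᵀ * U = 1 →
      Measure.map (fun Q => Matrix.of.symm (U * Matrix.of Q)) μ = μ)
    (i j : Fin m) (hij : i ≠ j) :
    (∫ Q, Pm k hkm Q i j ∂μ) = 0 := by
  set d : Fin m → ℝ := fun l => if l = i then -1 else 1 with hd
  have hU : (Matrix.diagonal d)ᵀ * Matrix.diagonal d = 1 := by
    rw [Matrix.diagonal_transpose, Matrix.diagonal_mul_diagonal]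
    have hdd : (fun l => d l * d l) = fun _ => (1:ℝ) := by
      funext l; by_cases h : l = i <;> simp [hd, h]
    rw [hdd, Matrix.diagonal_one]
  have key := integral_Pij_conj hkm μ hsupp _ hU (hinv _ hU) i j
  have hred : (∑ a, ∑ b, Matrix.diagonal d i a *
        ((∫ Q, Pm k hkm Q a b ∂μ) * Matrix.diagonal d j b))
      = d i * ((∫ Q, Pm k hkm Q i j ∂μ) * d j) := by
    rw [Finset.sum_eq_single i]
    · rw [Finset.sum_eq_single j]
      · simp
      · intro b _ hb
        simp [Matrix.diagonal_apply, Ne.symm hb]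
      · simp
    · intro a _ ha
      simp [Matrix.diagonal_apply, Ne.symm ha]
    · simp
  rw [hred] at key
  have hdi : d i = -1 := by simp [hd]
  have hdj : d j = 1 := by simp [hd, hij.symm]
  rw [hdi, hdj] at key
  linarith [key]

lemma entry_perm (hkm : k ≤ m) (μ : Measure (Fin m → Fin m → ℝ))
    [IsProbabilityMeasure μ]
    (hsupp : μ {Q | (Matrix.of Q)ᵀ * Matrix.of Q = 1} = 1)
    (hinv : ∀ U : Matrix (Fin m) (Fin m) ℝ, Uᵀ * U = 1 →
      Measure.map (fun Q => Matrix.of.symm (U * Matrix.of Q)) μ = μ)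
    (e : Equiv.Perm (Fin m)) (i j : Fin m) :
    (∫ Q, Pm k hkm Q i j ∂μ) = ∫ Q, Pm k hkm Q (e i) (e j) ∂μ := by
  set U : Matrix (Fin m) (Fin m) ℝ := e.toPEquiv.toMatrix with hUdef
  have hUa : ∀ a b : Fin m, U a b = if b = e a then 1 else 0 := by
    intro a b
    simp [hUdef, Equiv.toPEquiv_apply, eq_comm]
  have hU : Uᵀ * U = 1 := by
    rw [hUdef, ← PEquiv.toMatrix_symm, ← PEquiv.toMatrix_trans, ← Equiv.toPEquiv_symm,
      ← Equiv.toPEquiv_trans]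
    simp [Equiv.toPEquiv_refl, PEquiv.toMatrix_refl]
  have key := integral_Pij_conj hkm μ hsupp U hU (hinv U hU) i j
  have hred : (∑ a, ∑ b, U i a * ((∫ Q, Pm k hkm Q a b ∂μ) * U j b))
      = ∫ Q, Pm k hkm Q (e i) (e j) ∂μ := by
    rw [Finset.sum_eq_single (e i)]
    · rw [Finset.sum_eq_single (e j)]
      · simp [hUa]
      · intro b _ hb
        simp [hUa, hb]
      · simp
    · intro a _ ha
      simp [hUa, ha]
    · simp
  rw [key, hred]

lemma trace_Pm (hkm : k ≤ m) (Q : Fin m → Fin m → ℝ)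
    (hQ : (Matrix.of Q)ᵀ * Matrix.of Q = 1) :
    ∑ i, Pm k hkm Q i i = (k : ℝ) := by
  simp_rw [Pm_apply]
  rw [Finset.sum_comm]
  have hcol : ∀ l : Fin k, ∑ i, Q i (Fin.castLE hkm l) * Q i (Fin.castLE hkm l) = 1 := by
    intro l
    have := congrArg (fun M => M l l) (BtB hkm Q hQ)
    simpa [firstCols, Matrix.mul_apply, Matrix.one_apply] using this
  rw [Finset.sum_congr rfl fun l _ => hcol l]
  simp

lemma entry_diag (hm : 1 ≤ m) (hkm : k ≤ m) (μ : Measure (Fin m → Fin m → ℝ))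
    [IsProbabilityMeasure μ]
    (hsupp : μ {Q | (Matrix.of Q)ᵀ * Matrix.of Q = 1} = 1)
    (hinv : ∀ U : Matrix (Fin m) (Fin m) ℝ, Uᵀ * U = 1 →
      Measure.map (fun Q => Matrix.of.symm (U * Matrix.of Q)) μ = μ)
    (i : Fin m) :
    (∫ Q, Pm k hkm Q i i ∂μ) = (k : ℝ) / m := by
  have htr : ∑ a : Fin m, ∫ Q, Pm k hkm Q a a ∂μ = (k : ℝ) := by
    rw [← integral_finset_sum _ (fun a _ => integrable_Pij hkm μ hsupp a a)]
    have hcong : (fun Q => ∑ a : Fin m, Pm k hkm Q a a) =ᵐ[μ] fun _ => (k : ℝ) := by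
      filter_upwards [ae_orth μ hsupp] with Q hQ
      exact trace_Pm hkm Q hQ
    rw [integral_congr_ae hcong, integral_const]
    simp
  have hall : ∀ a : Fin m, (∫ Q, Pm k hkm Q a a ∂μ) = ∫ Q, Pm k hkm Q i i ∂μ := by
    intro a
    have := entry_perm hkm μ hsupp hinv (Equiv.swap a i) a a
    rwa [Equiv.swap_apply_left] at this
  rw [Finset.sum_congr rfl fun a _ => hall a, Finset.sum_const, Finset.card_univ,
    Fintype.card_fin, nsmul_eq_mul] at htr
  have hm0 : (m : ℝ) ≠ 0 := Nat.cast_ne_zero.mpr (by omega)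
  field_simp
  linarith [htr]

lemma integrable_h (hkm : k ≤ m) (μ : Measure (Fin m → Fin m → ℝ))
    [IsProbabilityMeasure μ]
    (hsupp : μ {Q | (Matrix.of Q)ᵀ * Matrix.of Q = 1} = 1)
    (g : EuclideanSpace ℝ (Fin m)) :
    Integrable (fun Q => (fun i => g i) ⬝ᵥ Pm k hkm Q *ᵥ (fun i => g i)) μ := by
  have hfun : (fun Q : Fin m → Fin m → ℝ => (fun i => g i) ⬝ᵥ Pm k hkm Q *ᵥ (fun i => g i))
      = fun Q => ∑ i, ∑ j, g i * (Pm k hkm Q i j * g j) := by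
    funext Q
    simp [dotProduct, Matrix.mulVec, Finset.mul_sum]
  rw [hfun]
  exact integrable_finset_sum _ fun i _ => integrable_finset_sum _ fun j _ =>
    ((integrable_Pij hkm μ hsupp i j).mul_const _).const_mul _

lemma integral_h (hm : 1 ≤ m) (hkm : k ≤ m) (μ : Measure (Fin m → Fin m → ℝ))
    [IsProbabilityMeasure μ]
    (hsupp : μ {Q | (Matrix.of Q)ᵀ * Matrix.of Q = 1} = 1)
    (hinv : ∀ U : Matrix (Fin m) (Fin m) ℝ, Uᵀ * U = 1 →
      Measure.map (fun Q => Matrix.of.symm (U * Matrix.of Q)) μ = μ)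
    (g : EuclideanSpace ℝ (Fin m)) :
    ∫ Q, (fun i => g i) ⬝ᵥ Pm k hkm Q *ᵥ (fun i => g i) ∂μ
      = (k : ℝ) / m * ∑ i, g i ^ 2 := by
  have hfun : ∀ Q : Fin m → Fin m → ℝ, (fun i => g i) ⬝ᵥ Pm k hkm Q *ᵥ (fun i => g i)
      = ∑ i, ∑ j, g i * (Pm k hkm Q i j * g j) := by
    intro Q
    simp [dotProduct, Matrix.mulVec, Finset.mul_sum]
  simp_rw [hfun]
  rw [integral_finset_sum _ (fun i _ => integrable_finset_sum _ fun j _ =>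
    ((integrable_Pij hkm μ hsupp i j).mul_const _).const_mul _)]
  have step : ∀ i : Fin m,
      (∫ Q, ∑ j, g i * (Pm k hkm Q i j * g j) ∂μ) = (k : ℝ) / m * g i ^ 2 := by
    intro i
    rw [integral_finset_sum _ (fun j _ =>
      ((integrable_Pij hkm μ hsupp i j).mul_const _).const_mul _)]
    have step2 : ∀ j : Fin m, (∫ Q, g i * (Pm k hkm Q i j * g j) ∂μ)
        = g i * ((∫ Q, Pm k hkm Q i j ∂μ) * g j) := by
      intro j
      rw [MeasureTheory.integral_const_mul, MeasureTheory.integral_mul_const]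
    rw [Finset.sum_congr rfl fun j _ => step2 j]
    rw [Finset.sum_eq_single i]
    · rw [entry_diag hm hkm μ hsupp hinv i]; ring
    · intro j _ hj
      rw [entry_offdiag hkm μ hsupp hinv i j (Ne.symm hj)]; ring
    · simp
  rw [Finset.sum_congr rfl fun i _ => step i, ← Finset.mul_sum]

end HaarKAux

open HaarKAux

/-- For `Q̃` the first `k` columns of a Haar-distributed orthogonal matrix and
any `g ∈ ℝᵐ`, `E[‖g − (m/k)·Q̃ Q̃ᵀ g‖²] = (m/k − 1)·‖g‖²`: the haar-k compressor is
`ω`-unbiased with `ω = m/k − 1`.  The Haar measure is characterized as a probability measure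
supported on the orthogonal matrices and invariant under left translation by any orthogonal
matrix. -/
theorem haar_k_omega_unbiased (m k : ℕ) (hm : 1 ≤ m) (hk : 1 ≤ k) (hkm : k ≤ m)
    (g : EuclideanSpace ℝ (Fin m))
    (μ : Measure (Fin m → Fin m → ℝ)) [IsProbabilityMeasure μ]
    (hsupp : μ {Q | (Matrix.of Q)ᵀ * (Matrix.of Q) = 1} = 1)
    (hinv : ∀ U : Matrix (Fin m) (Fin m) ℝ, Uᵀ * U = 1 →
      Measure.map (fun Q => Matrix.of.symm (U * Matrix.of Q)) μ = μ) :
    ∫ Q, ‖g - ((m : ℝ) / k) •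
        Matrix.toEuclideanLin ((firstCols k hkm Q) * (firstCols k hkm Q)ᵀ) g‖ ^ 2 ∂μ =
      ((m : ℝ) / k - 1) * ‖g‖ ^ 2 := by
  have hPdef : ∀ Q : Fin m → Fin m → ℝ,
      firstCols k hkm Q * (firstCols k hkm Q)ᵀ = Pm k hkm Q := fun Q => rfl
  simp_rw [hPdef]
  set c : ℝ := (m : ℝ) / k with hc
  have hae : (fun Q => ‖g - c • Matrix.toEuclideanLin (Pm k hkm Q) g‖ ^ 2)
      =ᵐ[μ] fun Q => ‖g‖ ^ 2 + (c ^ 2 - 2 * c) *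
        ((fun i => g i) ⬝ᵥ Pm k hkm Q *ᵥ (fun i => g i)) := by
    filter_upwards [ae_orth μ hsupp] with Q hQ
    exact pointwise hkm c g Q hQ
  rw [integral_congr_ae hae,
    integral_add (integrable_const _) ((integrable_h hkm μ hsupp g).const_mul _),
    integral_const, MeasureTheory.integral_const_mul, integral_h hm hkm μ hsupp hinv g]
  have hk0 : (k : ℝ) ≠ 0 := Nat.cast_ne_zero.mpr (by omega)
  have hm0 : (m : ℝ) ≠ 0 := Nat.cast_ne_zero.mpr (by omega)
  rw [norm_sq_euclidean g]
  simp only [measure_univ, probReal_univ, ENNReal.toReal_one, smul_eq_mul, one_mul, hc]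
  field_simp
  ring
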